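/- arXiv:1409.3905 — 3 statements merged into one kernel-verified Lean document; each statement's English description precedes it below -/
import Mathlib

section
/- Let T = (V,E) be a finite tree with root r. Suppose to each edge e ∈ E corresponds a random variable X_e, and these variables are independent. Suppose to each vertex v ∈ V corresponds an event Ω_v depending only on the variables X_e with v ∈ e, and suppose there are numbers p_v ≤ 1 such that for every v ∈ V and every edge e₀ incident to v, the conditional probability P(Ω_v | {X_e}_{e ≠ e₀}) ≤ p_v almost surely. Then P(⋂_{v ∈ V\{r}} Ω_v) ≤ ∏_{v ∈ V\{r}} p_v. -/
open MeasureTheory ProbabilityTheory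

private lemma indicator_one_nonneg {Ω : Type*} (s : Set Ω) (ω : Ω) :
    0 ≤ s.indicator (fun _ => (1 : ℝ)) ω := by
  by_cases h : ω ∈ s <;> simp [h]

private lemma indicator_one_le_one {Ω : Type*} (s : Set Ω) (ω : Ω) :
    s.indicator (fun _ => (1 : ℝ)) ω ≤ 1 := by
  by_cases h : ω ∈ s <;> simp [h]

private lemma prod_indicator_one {V Ω : Type*} (Ωv : V → Set Ω) (S : Finset V) (ω : Ω) :
    ∏ v ∈ S, (Ωv v).indicator (fun _ => (1 : ℝ)) ω
      = (⋂ v ∈ S, Ωv v).indicator (fun _ => (1 : ℝ)) ω := by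
  by_cases h : ∀ v ∈ S, ω ∈ Ωv v
  · have h1 : ∀ v ∈ S, (Ωv v).indicator (fun _ => (1 : ℝ)) ω = 1 := fun v hv =>
      Set.indicator_of_mem (h v hv) _
    rw [Finset.prod_congr rfl h1, Finset.prod_const_one,
      Set.indicator_of_mem (Set.mem_iInter₂.mpr h)]
  · push_neg at h
    obtain ⟨v, hv, hωv⟩ := h
    rw [Finset.prod_eq_zero hv (by simp [Set.indicator_of_notMem hωv])]
    have hnm : ω ∉ ⋂ v ∈ S, Ωv v := fun hmem => hωv (Set.mem_iInter₂.mp hmem v hv)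
    simp [Set.indicator_of_notMem hnm]

/-- The key conditional-expectation step: if `f` is `m`-measurable with values in `[0,1]`,
`g` is integrable and nonnegative, and `μ[g|m] ≤ c` a.s., then `c ≥ 0` and
`∫ f·g ≤ (∫ f)·c`. -/
private lemma condexp_step {Ω : Type*} {m m0 : MeasurableSpace Ω} (hm : m ≤ m0)
    {μ : Measure Ω} [IsProbabilityMeasure μ] {f g : Ω → ℝ}
    (hf_sm : StronglyMeasurable[m] f)
    (hf_nonneg : ∀ ω, 0 ≤ f ω) (hf_le_one : ∀ ω, f ω ≤ 1)
    (hg_int : Integrable g μ) (hg_nonneg : ∀ ω, 0 ≤ g ω)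
    {c : ℝ} (hcond : μ[g|m] ≤ᵐ[μ] fun _ => c) :
    0 ≤ c ∧ ∫ ω, f ω * g ω ∂μ ≤ (∫ ω, f ω ∂μ) * c := by
  haveI : SigmaFinite (μ.trim hm) := by
    haveI := isFiniteMeasure_trim (μ := μ) hm
    infer_instance
  have hfmeas : AEStronglyMeasurable f μ := (hf_sm.mono hm).aestronglyMeasurable
  have hfb : ∀ ω, ‖f ω‖ ≤ 1 := fun ω => by
    rw [Real.norm_eq_abs, abs_of_nonneg (hf_nonneg ω)]; exact hf_le_one ω
  have hfg_int : Integrable (f * g) μ := hg_int.bdd_mul hfmeas (.of_forall hfb)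
  have hf_int : Integrable f μ :=
    Integrable.mono' (integrable_const 1) hfmeas (.of_forall hfb)
  constructor
  · have h1 : ∫ ω, (μ[g|m]) ω ∂μ ≤ ∫ _ω, c ∂μ :=
      integral_mono_ae integrable_condExp (integrable_const _) hcond
    have h2 : ∫ ω, (μ[g|m]) ω ∂μ = ∫ ω, g ω ∂μ := integral_condExp hm (f := g)
    have h3 : (0 : ℝ) ≤ ∫ ω, g ω ∂μ := integral_nonneg hg_nonneg
    rw [h2, integral_const] at h1
    simp only [probReal_univ, measure_univ, ENNReal.toReal_one, one_smul] at h1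
    linarith
  · calc ∫ ω, f ω * g ω ∂μ
        = ∫ ω, (f * g) ω ∂μ := rfl
      _ = ∫ ω, (μ[f * g|m]) ω ∂μ := (integral_condExp hm (f := f * g)).symm
      _ = ∫ ω, f ω * (μ[g|m]) ω ∂μ :=
          integral_congr_ae (condExp_mul_of_stronglyMeasurable_left hf_sm hfg_int hg_int)
      _ ≤ ∫ ω, f ω * c ∂μ := by
          refine integral_mono_ae
            (integrable_condExp.bdd_mul hfmeas (.of_forall hfb)) (hf_int.mul_const _) ?_
          filter_upwards [hcond] with ω hω
          exact mul_le_mul_of_nonneg_left hω (hf_nonneg ω)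
      _ = (∫ ω, f ω ∂μ) * c := integral_mul_const _ _

/-- Lemma 2.4: let T be a finite tree with root r, with independent random
variables X_e attached to the edges, and events Ω_v attached to the vertices, Ω_v
depending only on the variables X_e with v ∈ e. If for every vertex v and every
edge e₀ incident to v the conditional probability of Ω_v given all the variables
{X_e}_{e ≠ e₀} is a.s. at most p_v, then
P(⋂_{v ≠ r} Ω_v) ≤ ∏_{v ≠ r} p_v. -/
theorem stmt2 {V : Type*} [Fintype V] [DecidableEq V]
    (T : SimpleGraph V) (hT : T.IsTree) (r : V)
    {Ω : Type*} [MeasureSpace Ω] [IsProbabilityMeasure (volume : Measure Ω)]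
    {β : Type*} [mβ : MeasurableSpace β]
    (X : T.edgeSet → Ω → β) (hXmeas : ∀ e, Measurable (X e))
    (hindep : iIndepFun X volume)
    (Ωv : V → Set Ω) (hΩmeas : ∀ v, MeasurableSet (Ωv v))
    (hdep : ∀ v : V, MeasurableSet[⨆ (e : T.edgeSet) (_ : v ∈ (e : Sym2 V)),
      MeasurableSpace.comap (X e) mβ] (Ωv v))
    (p : V → ℝ) (hp : ∀ v, p v ≤ 1)
    (hcond : ∀ (v : V) (e₀ : T.edgeSet), v ∈ (e₀ : Sym2 V) →
      (volume[(Ωv v).indicator (fun _ => (1 : ℝ)) |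
          ⨆ (e : T.edgeSet) (_ : e ≠ e₀), MeasurableSpace.comap (X e) mβ])
        ≤ᵐ[volume] fun _ => p v) :
    volume (⋂ v ∈ ({r}ᶜ : Set V), Ωv v) ≤
      ENNReal.ofReal (∏ v ∈ Finset.univ.erase r, p v) := by
  classical
  have hconn : T.Connected := hT.isConnected
  -- main inductive claim
  have key : ∀ S : Finset V, r ∉ S →
      ∫ ω, ∏ v ∈ S, (Ωv v).indicator (fun _ => (1 : ℝ)) ω ≤ ∏ v ∈ S, p v := by
    intro S
    induction S using Finset.strongInductionOn with
    | _ S ih =>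
      intro hrS
      rcases S.eq_empty_or_nonempty with rfl | hne
      · simp
      -- pick a vertex of S of minimal distance to the root
      obtain ⟨w, hwS, hwmin⟩ := S.exists_min_image (fun v => T.dist r v) hne
      have hwr : w ≠ r := fun h => hrS (h ▸ hwS)
      -- find a neighbour u of w strictly closer to the root
      obtain ⟨P, hP⟩ := hconn.exists_walk_length_eq_dist r w
      have hdpos : P.length ≠ 0 := fun h => hwr (P.eq_of_length_eq_zero h).symm
      have hqnil : ¬ P.reverse.Nil := SimpleGraph.Walk.not_nil_of_ne hwr
      set u := P.reverse.getVert 1 with hu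
      have hadj : T.Adj w u := P.reverse.adj_snd hqnil
      have hqlen : P.reverse.length = T.dist r w := by
        rw [SimpleGraph.Walk.length_reverse, hP]
      have hdu : T.dist r u < T.dist r w := by
        have h1 : T.dist r u ≤ P.reverse.tail.reverse.length := T.dist_le _
        have h2 : P.reverse.tail.length + 1 = P.reverse.length :=
          SimpleGraph.Walk.length_tail_add_one hqnil
        rw [SimpleGraph.Walk.length_reverse] at h1
        omega
      have huS : u ∉ S := fun huS => absurd (hwmin u huS) (not_le.mpr hdu)
      have huw : u ≠ w := by intro h; rw [h] at hdu; omega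
      -- the edge of w towards the root
      have heT : s(w, u) ∈ T.edgeSet := hadj
      have hwe₀ : w ∈ ((⟨s(w, u), heT⟩ : T.edgeSet) : Sym2 V) := Sym2.mem_mk_left w u
      have hm : (⨆ (e : T.edgeSet) (_ : e ≠ (⟨s(w, u), heT⟩ : T.edgeSet)),
            MeasurableSpace.comap (X e) mβ) ≤ MeasureSpace.toMeasurableSpace :=
        iSup₂_le fun e _ => (hXmeas e).comap_le
      -- the other events are measurable w.r.t. the sup σ-algebra
      have hΩm : ∀ v ∈ S.erase w,
          MeasurableSet[⨆ (e : T.edgeSet) (_ : e ≠ (⟨s(w, u), heT⟩ : T.edgeSet)),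
            MeasurableSpace.comap (X e) mβ] (Ωv v) := by
        intro v hv
        have hvw : v ≠ w := (Finset.mem_erase.mp hv).1
        have hvS : v ∈ S := (Finset.mem_erase.mp hv).2
        have hvu : v ≠ u := fun h => huS (h ▸ hvS)
        have hle : (⨆ (e : T.edgeSet) (_ : v ∈ (e : Sym2 V)),
            MeasurableSpace.comap (X e) mβ)
            ≤ ⨆ (e : T.edgeSet) (_ : e ≠ (⟨s(w, u), heT⟩ : T.edgeSet)),
              MeasurableSpace.comap (X e) mβ := by
          refine iSup₂_le fun e he => ?_
          have hne : e ≠ (⟨s(w, u), heT⟩ : T.edgeSet) := by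
            intro h
            rw [h] at he
            rcases Sym2.mem_iff.mp he with h' | h'
            · exact hvw h'
            · exact hvu h'
          exact le_iSup₂ (f := fun (e : T.edgeSet)
            (_ : e ≠ (⟨s(w, u), heT⟩ : T.edgeSet)) =>
            MeasurableSpace.comap (X e) mβ) e hne
        exact hle _ (hdep v)
      have hf_sm : StronglyMeasurable[⨆ (e : T.edgeSet)
          (_ : e ≠ (⟨s(w, u), heT⟩ : T.edgeSet)), MeasurableSpace.comap (X e) mβ]
          (fun ω => ∏ v ∈ S.erase w, (Ωv v).indicator (fun _ => (1 : ℝ)) ω) := by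
        refine Measurable.stronglyMeasurable ?_
        exact Finset.measurable_prod _ fun v hv =>
          Measurable.indicator measurable_const (hΩm v hv)
      have hstep := condexp_step hm hf_sm
        (fun ω => Finset.prod_nonneg fun v _ => indicator_one_nonneg _ ω)
        (fun ω => Finset.prod_le_one (fun v _ => indicator_one_nonneg _ ω)
          (fun v _ => indicator_one_le_one _ ω))
        ((integrable_const (1 : ℝ)).indicator (hΩmeas w))
        (fun ω => indicator_one_nonneg _ ω)
        (hcond w ⟨s(w, u), heT⟩ hwe₀)
      have hIH : ∫ ω, ∏ v ∈ S.erase w, (Ωv v).indicator (fun _ => (1 : ℝ)) ω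
          ≤ ∏ v ∈ S.erase w, p v :=
        ih (S.erase w) (Finset.erase_ssubset hwS)
          (fun h => hrS (Finset.mem_of_mem_erase h))
      calc ∫ ω, ∏ v ∈ S, (Ωv v).indicator (fun _ => (1 : ℝ)) ω
          = ∫ ω, (∏ v ∈ S.erase w, (Ωv v).indicator (fun _ => (1 : ℝ)) ω)
              * (Ωv w).indicator (fun _ => (1 : ℝ)) ω := by
            refine integral_congr_ae (Filter.Eventually.of_forall fun ω => ?_)
            exact (Finset.prod_erase_mul S _ hwS).symm
        _ ≤ (∫ ω, ∏ v ∈ S.erase w, (Ωv v).indicator (fun _ => (1 : ℝ)) ω) * p w :=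
            hstep.2
        _ ≤ (∏ v ∈ S.erase w, p v) * p w := mul_le_mul_of_nonneg_right hIH hstep.1
        _ = ∏ v ∈ S, p v := by rw [mul_comm]; exact Finset.mul_prod_erase S p hwS
  -- conclude
  have hS₀ := key (Finset.univ.erase r) (Finset.notMem_erase r _)
  have hsets : (⋂ v ∈ ({r}ᶜ : Set V), Ωv v)
      = ⋂ v ∈ (Finset.univ.erase r : Finset V), Ωv v := by
    ext ω; simp
  have hmeasset : MeasurableSet (⋂ v ∈ (Finset.univ.erase r : Finset V), Ωv v) :=
    MeasurableSet.biInter (Set.to_countable _) fun v _ => hΩmeas v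
  have hint : ∫ ω, ∏ v ∈ Finset.univ.erase r, (Ωv v).indicator (fun _ => (1 : ℝ)) ω
      = (volume (⋂ v ∈ (Finset.univ.erase r : Finset V), Ωv v)).toReal := by
    rw [show (fun ω => ∏ v ∈ Finset.univ.erase r, (Ωv v).indicator (fun _ => (1 : ℝ)) ω)
        = (⋂ v ∈ (Finset.univ.erase r : Finset V), Ωv v).indicator (fun _ => (1 : ℝ))
      from funext fun ω => prod_indicator_one Ωv _ ω]
    exact integral_indicator_one hmeasset
  rw [hsets, ← ENNReal.ofReal_toReal (measure_ne_top volume _)]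
  exact ENNReal.ofReal_le_ofReal (hint ▸ hS₀)
end

section
/- Let W be an n×n real skew-symmetric random matrix with independent (up to skew-symmetry) centered Gaussian entries, and let c > 0. Assume that for every column index j ∈ [n] there are at least d indices i with Var(w_{ij}) ≥ n^{-c}. Then there exist constants C, c' depending only on c such that for every unit vector x ∈ S^{n-1} and every t > 0, P(‖Wx‖₂ ≤ t·n^{-c'}) ≤ (C t)^d. -/
open MeasureTheory ProbabilityTheory Matrix

section helpers1
open MeasureTheory ProbabilityTheory Real

lemma gauss_set_le' (μ0 : ℝ) (v : NNReal) (hv : v ≠ 0) (s : Set ℝ) :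
    gaussianReal μ0 v s ≤ ENNReal.ofReal (Real.sqrt (2*π*v))⁻¹ * volume s := by
  rw [gaussianReal_apply _ hv]
  calc ∫⁻ x in s, gaussianPDF μ0 v x
      ≤ ∫⁻ _x in s, ENNReal.ofReal (Real.sqrt (2*π*v))⁻¹ := by
        refine lintegral_mono fun x => ?_
        refine ENNReal.ofReal_le_ofReal ?_
        unfold gaussianPDFReal
        calc (Real.sqrt (2*π*v))⁻¹ * Real.exp (-(x - μ0)^2 / (2*v))
            ≤ (Real.sqrt (2*π*v))⁻¹ * 1 := by
              refine mul_le_mul_of_nonneg_left ?_ (by positivity)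
              rw [Real.exp_le_one_iff, neg_div]
              have : (0:ℝ) ≤ (x - μ0)^2 / (2*v) := by positivity
              linarith
          _ = _ := mul_one _
    _ = ENNReal.ofReal (Real.sqrt (2*π*v))⁻¹ * volume s := by
        rw [setLIntegral_const]


lemma gauss_sq_le (v : NNReal) : ∫ x, x^2 ∂(gaussianReal 0 v) ≤ 3 * v := by
  by_cases hv : v = 0
  · simp [hv, gaussianReal_zero_var, integral_dirac]
  · have hvpos : (0:ℝ) < v := by exact_mod_cast pos_iff_ne_zero.mpr hv
    rw [gaussianReal_of_var_ne_zero _ hv]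
    have hpdf : (gaussianPDF 0 v) = fun x => ((Real.toNNReal (gaussianPDFReal 0 v x) : NNReal) : ENNReal) := rfl
    rw [hpdf, integral_withDensity_eq_integral_smul
      (by exact (measurable_gaussianPDFReal 0 v).real_toNNReal) _]
    have hmain : ∀ x : ℝ, (Real.toNNReal (gaussianPDFReal 0 v x)) • x^2
        ≤ (Real.sqrt (2*π*v))⁻¹ * ((4*v/Real.exp 1) * Real.exp (-(1/(4*v)) * x^2)) := by
      intro x
      have hnn : 0 ≤ gaussianPDFReal 0 v x := gaussianPDFReal_nonneg _ _ _
      rw [NNReal.smul_def, smul_eq_mul, Real.coe_toNNReal _ hnn]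
      unfold gaussianPDFReal
      have key : x^2 * Real.exp (-(x - 0)^2 / (2*v))
          ≤ (4*v/Real.exp 1) * Real.exp (-(1/(4*v)) * x^2) := by
        have hsplit : Real.exp (-(x-0)^2 / (2*v))
            = Real.exp (-(1/(4*v)) * x^2) * Real.exp (-(1/(4*v)) * x^2) := by
          rw [← Real.exp_add]; congr 1; field_simp; ring
        rw [hsplit, ← mul_assoc]
        refine mul_le_mul_of_nonneg_right ?_ (Real.exp_nonneg _)
        -- x^2 * exp(-(1/(4v)) x^2) ≤ 4v/e
        set w : ℝ := (1/(4*v)) * x^2 with hw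
        have hwnn : 0 ≤ w := by positivity
        have h1 : w ≤ Real.exp (w - 1) := by
          have := Real.add_one_le_exp (w - 1); linarith
        have h2 : w * Real.exp (-w) ≤ (Real.exp 1)⁻¹ := by
          have h3 : w * Real.exp (-w) ≤ Real.exp (w-1) * Real.exp (-w) :=
            mul_le_mul_of_nonneg_right h1 (Real.exp_nonneg _)
          calc w * Real.exp (-w) ≤ Real.exp (w-1) * Real.exp (-w) := h3
            _ = (Real.exp 1)⁻¹ := by rw [← Real.exp_add, ← Real.exp_neg]; ring_nf
        have hx2 : x^2 = (4*v) * w := by rw [hw]; field_simp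
        have hexpw : Real.exp (-(1/(4*v)) * x^2) = Real.exp (-w) := by rw [hw, neg_mul]
        calc x^2 * Real.exp (-(1/(4*v)) * x^2) = (4*v) * (w * Real.exp (-w)) := by
              rw [hexpw, hx2]; ring
          _ ≤ (4*v) * (Real.exp 1)⁻¹ := by
              refine mul_le_mul_of_nonneg_left h2 (by positivity)
          _ = 4*v/Real.exp 1 := by ring
      calc (Real.sqrt (2*π*v))⁻¹ * Real.exp (-(x-0)^2 / (2*v)) * x^2
          = (Real.sqrt (2*π*v))⁻¹ * (x^2 * Real.exp (-(x-0)^2/(2*v))) := by ring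
        _ ≤ (Real.sqrt (2*π*v))⁻¹ * ((4*v/Real.exp 1) * Real.exp (-(1/(4*v)) * x^2)) := by
            refine mul_le_mul_of_nonneg_left key (by positivity)
    have hint : Integrable (fun x : ℝ => (Real.sqrt (2*π*v))⁻¹ *
        ((4*v/Real.exp 1) * Real.exp (-(1/(4*v)) * x^2))) := by
      exact ((integrable_exp_neg_mul_sq (by positivity)).const_mul _).const_mul _
    have hintL : Integrable (fun x : ℝ => (Real.toNNReal (gaussianPDFReal 0 v x)) • x^2) := by
      refine hint.mono ?_ (ae_of_all _ fun x => ?_)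
      · refine Measurable.aestronglyMeasurable ?_
        exact ((measurable_gaussianPDFReal 0 v).real_toNNReal.coe_nnreal_real.mul
          (measurable_id.pow_const 2))
      · rw [Real.norm_eq_abs, Real.norm_eq_abs]
        have h0 : (0:ℝ) ≤ (Real.toNNReal (gaussianPDFReal 0 v x)) • x^2 := by
          rw [NNReal.smul_def, smul_eq_mul]; positivity
        rw [abs_of_nonneg h0, abs_of_nonneg (by positivity)]
        exact hmain x
    calc ∫ x, (Real.toNNReal (gaussianPDFReal 0 v x)) • x^2
        ≤ ∫ x, (Real.sqrt (2*π*v))⁻¹ * ((4*v/Real.exp 1) * Real.exp (-(1/(4*v)) * x^2)) :=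
          integral_mono hintL hint hmain
      _ = (Real.sqrt (2*π*v))⁻¹ * (4*v/Real.exp 1) * Real.sqrt (π/(1/(4*v))) := by
          rw [integral_const_mul, integral_const_mul, integral_gaussian]; ring
      _ ≤ 3 * v := by
          have hsq : Real.sqrt (π/(1/(4*v))) = Real.sqrt 2 * Real.sqrt (2*π*v) := by
            rw [← Real.sqrt_mul (by norm_num)]
            congr 1; field_simp; ring
          rw [hsq]
          have hspos : 0 < Real.sqrt (2*π*v) := Real.sqrt_pos.mpr (by positivity)
          have hre : (Real.sqrt (2*π*v))⁻¹ * (4*v/Real.exp 1) * (Real.sqrt 2 * Real.sqrt (2*π*v))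
              = 4*(v:ℝ)/Real.exp 1 * Real.sqrt 2 := by
            field_simp
          rw [hre]
          have he : (2:ℝ) ≤ Real.exp 1 := by
            have := Real.add_one_le_exp 1; linarith
          have hs2 : Real.sqrt 2 ≤ 1.5 := by
            rw [show (1.5:ℝ) = Real.sqrt (1.5^2) by rw [Real.sqrt_sq]; norm_num]
            exact Real.sqrt_le_sqrt (by norm_num)
          have hd : 4*(v:ℝ)/Real.exp 1 ≤ 2*v := by
            rw [div_le_iff₀ (by positivity)]
            nlinarith [v.coe_nonneg]
          calc 4*(v:ℝ)/Real.exp 1 * Real.sqrt 2 ≤ 2*v * 1.5 := by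
                refine mul_le_mul hd hs2 (Real.sqrt_nonneg _) (by positivity)
            _ = 3*v := by ring



lemma var_le_of_gauss {Ω : Type} [MeasureSpace Ω]
    [IsProbabilityMeasure (volume : Measure Ω)] (f : Ω → ℝ) (hf : Measurable f)
    (v : NNReal) (hmap : Measure.map f volume = gaussianReal 0 v) :
    variance f volume ≤ 3 * v := by
  have h1 : variance f volume ≤ ∫ ω, (f ω)^2 :=
    variance_le_expectation_sq hf.aestronglyMeasurable
  have h2 : ∫ ω, (f ω)^2 = ∫ x, x^2 ∂(Measure.map f volume) := by
    rw [integral_map hf.aemeasurable]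
    exact (measurable_id.pow_const 2).aestronglyMeasurable
  rw [h2, hmap] at h1
  exact h1.trans (gauss_sq_le v)

lemma gauss_absval_le (v : NNReal) (hv : v ≠ 0) (a r s : ℝ) (ha : a ≠ 0) (hs : 0 ≤ s) :
    gaussianReal 0 v {u | |a * u + r| ≤ s}
      ≤ ENNReal.ofReal ((Real.sqrt (2*π*v))⁻¹ * (2*s/|a|)) := by
  have hsub : {u : ℝ | |a * u + r| ≤ s} ⊆ Set.Icc (-r/a - s/|a|) (-r/a + s/|a|) := by
    intro u hu
    simp only [Set.mem_setOf_eq] at hu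
    have hau : |u - (-r/a)| ≤ s/|a| := by
      have : |u - (-r/a)| * |a| ≤ s := by
        rw [← abs_mul]
        have : (u - -r/a) * a = a * u + r := by field_simp; ring
        rw [this]; exact hu
      rw [le_div_iff₀ (abs_pos.mpr ha)]
      exact this
    rw [abs_sub_le_iff] at hau
    constructor <;> [linarith [hau.2]; linarith [hau.1]]
  calc gaussianReal 0 v {u | |a * u + r| ≤ s}
      ≤ gaussianReal 0 v (Set.Icc (-r/a - s/|a|) (-r/a + s/|a|)) := measure_mono hsub
    _ ≤ ENNReal.ofReal (Real.sqrt (2*π*v))⁻¹ * volume (Set.Icc (-r/a - s/|a|) (-r/a + s/|a|)) :=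
        gauss_set_le' 0 v hv _
    _ ≤ ENNReal.ofReal ((Real.sqrt (2*π*v))⁻¹ * (2*s/|a|)) := by
        rw [Real.volume_Icc, ← ENNReal.ofReal_mul (by positivity)]
        refine ENNReal.ofReal_le_ofReal ?_
        refine mul_le_mul_of_nonneg_left ?_ (by positivity)
        rw [show -r/a + s/|a| - (-r/a - s/|a|) = 2*(s/|a|) by ring]
        rw [mul_div_assoc]

lemma gauss_main_bound (n : ℕ) (hn : 0 < n) (c t : ℝ) (hc : 0 < c) (ht : 0 < t)
    (v : NNReal) (hv3 : (n:ℝ)^(-c) ≤ 3*(v:ℝ)) (a r : ℝ)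
    (ha : Real.sqrt (1/n) ≤ |a|) :
    gaussianReal 0 v {u | |a * u + r| ≤ t * (n:ℝ)^(-(c/2+1))}
      ≤ ENNReal.ofReal (2*t) := by
  have hn1 : (1:ℝ) ≤ n := by exact_mod_cast hn
  have hnpos : (0:ℝ) < n := by positivity
  have hrc : (0:ℝ) < (n:ℝ)^(-c) := Real.rpow_pos_of_pos hnpos _
  have hvpos : (0:ℝ) < v := by nlinarith
  have hv : v ≠ 0 := by
    intro h; rw [h] at hvpos; simp at hvpos
  have hapos : (0:ℝ) < |a| := lt_of_lt_of_le (Real.sqrt_pos.mpr (by positivity)) ha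
  have hane : a ≠ 0 := fun h => by simp [h] at hapos
  have hs : (0:ℝ) ≤ t * (n:ℝ)^(-(c/2+1)) := by positivity
  refine (gauss_absval_le v hv a r _ hane hs).trans ?_
  refine ENNReal.ofReal_le_ofReal ?_
  -- (√(2πv))⁻¹ ≤ n^(c/2)
  have hsv : (n:ℝ)^(-(c/2)) ≤ Real.sqrt (2*π*v) := by
    have h1 : (n:ℝ)^(-c) ≤ 2*π*v := by
      nlinarith [Real.pi_gt_three]
    have h2 : Real.sqrt ((n:ℝ)^(-c)) ≤ Real.sqrt (2*π*v) := Real.sqrt_le_sqrt h1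
    refine le_trans (le_of_eq ?_) h2
    rw [Real.sqrt_eq_rpow, ← Real.rpow_mul hnpos.le]
    ring_nf
  have hinv : (Real.sqrt (2*π*v))⁻¹ ≤ ((n:ℝ)^(-(c/2)))⁻¹ := by
    refine inv_anti₀ (Real.rpow_pos_of_pos hnpos _) hsv
  have hinv2 : ((n:ℝ)^(-(c/2)))⁻¹ = (n:ℝ)^(c/2) := by
    rw [← Real.rpow_neg hnpos.le]; norm_num
  have hainv : 1/|a| ≤ Real.sqrt n := by
    rw [div_le_iff₀ hapos]
    have : Real.sqrt (1/n) * Real.sqrt n = 1 := by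
      rw [← Real.sqrt_mul (by positivity)]
      field_simp
      exact Real.sqrt_one
    nlinarith [Real.sqrt_nonneg (n:ℝ), Real.sqrt_nonneg (1/(n:ℝ))]
  have hsqn : Real.sqrt (n:ℝ) = (n:ℝ)^((1:ℝ)/2) := Real.sqrt_eq_rpow _
  calc (Real.sqrt (2*π*v))⁻¹ * (2*(t * (n:ℝ)^(-(c/2+1)))/|a|)
      ≤ (n:ℝ)^(c/2) * (2*(t * (n:ℝ)^(-(c/2+1))) * (n:ℝ)^((1:ℝ)/2)) := by
        rw [← hinv2, ← hsqn]
        have h2s : (0:ℝ) ≤ 2*(t * (n:ℝ)^(-(c/2+1))) := by positivity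
        refine mul_le_mul hinv ?_ (by positivity) (by positivity)
        rw [div_eq_mul_one_div]
        exact mul_le_mul_of_nonneg_left hainv h2s
    _ = 2*t * ((n:ℝ)^(c/2) * (n:ℝ)^(-(c/2+1)) * (n:ℝ)^((1:ℝ)/2)) := by ring
    _ ≤ 2*t := by
        rw [← Real.rpow_add hnpos, ← Real.rpow_add hnpos]
        have hle1 : (n:ℝ)^(c/2 + -(c/2+1) + (1:ℝ)/2) ≤ 1 := by
          refine Real.rpow_le_one_of_one_le_of_nonpos hn1 (by linarith)
        nlinarith

end helpers1

section helpers2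
open MeasureTheory

lemma clm_coord (n : ℕ) (A : Matrix (Fin n) (Fin n) ℝ) (x : EuclideanSpace ℝ (Fin n)) (i : Fin n) :
    (Matrix.toEuclideanCLM (𝕜 := ℝ) A x) i = A.mulVec x i := by
  have := Matrix.ofLp_toEuclideanCLM (𝕜 := ℝ) A x
  have h2 := congrFun this i
  exact h2

lemma coord_le_norm' {n : ℕ} (y : EuclideanSpace ℝ (Fin n)) (i : Fin n) : |y i| ≤ ‖y‖ := by
  have := EuclideanSpace.norm_eq y
  rw [this]
  have h1 : |y i| = Real.sqrt (|y i|^2) := by rw [Real.sqrt_sq_eq_abs, abs_abs]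
  rw [h1]
  refine Real.sqrt_le_sqrt ?_
  have : |y i|^2 = ‖y i‖^2 := by rw [Real.norm_eq_abs]
  rw [this]
  exact Finset.single_le_sum (f := fun j => ‖y j‖^2) (fun j _ => by positivity) (Finset.mem_univ i)

lemma exists_coord' {n : ℕ} (x : EuclideanSpace ℝ (Fin n)) (h : ‖x‖ = 1) : ∃ k, Real.sqrt (1/n) ≤ |x k| := by
  have hn : 0 < n := by
    rcases Nat.eq_zero_or_pos n with h0 | h
    · exfalso; subst h0
      have : x = 0 := Subsingleton.elim x 0
      rw [this] at h; simp at h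
    · exact h
  have hsum : ∑ i, x i ^ 2 = 1 := by
    have := EuclideanSpace.norm_eq x
    rw [h] at this
    have h2 : ∑ i, ‖x i‖^2 = 1 := by
      nlinarith [Real.sq_sqrt (show (0:ℝ) ≤ ∑ i, ‖x i‖^2 by positivity), this]
    simpa [Real.norm_eq_abs, sq_abs] using h2
  have : ∃ k ∈ Finset.univ, (1:ℝ)/n ≤ x k ^ 2 := by
    by_contra hcon
    push_neg at hcon
    have : ∑ i : Fin n, x i ^ 2 < ∑ _i : Fin n, (1:ℝ)/n := by
      refine Finset.sum_lt_sum_of_nonempty ⟨⟨0, hn⟩, Finset.mem_univ _⟩ ?_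
      intro i _; exact hcon i (Finset.mem_univ i)
    rw [hsum] at this
    simp [Finset.sum_const, Finset.card_univ] at this
    rw [mul_inv_cancel₀ (by positivity : (n:ℝ) ≠ 0)] at this
    exact lt_irrefl _ this
  obtain ⟨k, _, hk⟩ := this
  refine ⟨k, ?_⟩
  rw [show |x k| = Real.sqrt ((x k)^2) by rw [Real.sqrt_sq_eq_abs]]
  exact Real.sqrt_le_sqrt hk

end helpers2


section recon

variable {n : ℕ} (T : Finset {p : Fin n × Fin n // p.1 < p.2})

/-- Value of an entry indexed by an ordered pair, read off from the two blocks. -/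
def entryVal (z : ↥(Tᶜ) → ℝ) (y : ↥T → ℝ) (q : {p : Fin n × Fin n // p.1 < p.2}) : ℝ :=
  if hq : q ∈ T then y ⟨q, hq⟩ else z ⟨q, Finset.mem_compl.mpr hq⟩

/-- Reconstruct a skew-symmetric matrix from its above-diagonal entries, split into
two blocks. -/
def recon (z : ↥(Tᶜ) → ℝ) (y : ↥T → ℝ) : Matrix (Fin n) (Fin n) ℝ :=
  Matrix.of fun i j =>
    if h : i < j then entryVal T z y ⟨(i,j), h⟩
    else if h' : j < i then - entryVal T z y ⟨(j,i), h'⟩ else 0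

lemma entryVal_measurable (q : {p : Fin n × Fin n // p.1 < p.2}) :
    Measurable (fun p : (↥(Tᶜ) → ℝ) × (↥T → ℝ) => entryVal T p.1 p.2 q) := by
  unfold entryVal
  split_ifs with h
  · exact (measurable_pi_apply _).comp measurable_snd
  · exact (measurable_pi_apply _).comp measurable_fst

lemma recon_entry_measurable (i j : Fin n) :
    Measurable (fun p : (↥(Tᶜ) → ℝ) × (↥T → ℝ) => recon T p.1 p.2 i j) := by
  unfold recon
  simp only [Matrix.of_apply]
  split_ifs with h h'
  · exact entryVal_measurable T _
  · exact (entryVal_measurable T _).neg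
  · exact measurable_const

lemma recon_eq_of (z : ↥(Tᶜ) → ℝ) (y : ↥T → ℝ) (W : Matrix (Fin n) (Fin n) ℝ)
    (hskew : Wᵀ = -W)
    (hy : ∀ q : ↥T, y q = W (q : {p : Fin n × Fin n // p.1 < p.2}).1.1
      (q : {p : Fin n × Fin n // p.1 < p.2}).1.2)
    (hz : ∀ q : ↥(Tᶜ), z q = W (q : {p : Fin n × Fin n // p.1 < p.2}).1.1
      (q : {p : Fin n × Fin n // p.1 < p.2}).1.2) :
    recon T z y = W := by
  have hsym : ∀ i j, W j i = - W i j := by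
    intro i j
    have := congrFun (congrFun hskew i) j
    simpa [Matrix.transpose_apply] using this
  have hval : ∀ q : {p : Fin n × Fin n // p.1 < p.2}, entryVal T z y q = W q.1.1 q.1.2 := by
    intro q
    unfold entryVal
    split_ifs with hq
    · exact hy ⟨q, hq⟩
    · exact hz ⟨q, Finset.mem_compl.mpr hq⟩
  ext i j
  unfold recon
  simp only [Matrix.of_apply]
  split_ifs with h h'
  · exact hval ⟨(i,j), h⟩
  · rw [hval ⟨(j,i), h'⟩]
    show - W j i = W i j
    have := hsym j i
    linarith
  · have hij : i = j := le_antisymm (not_lt.mp h') (not_lt.mp h)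
    subst hij
    have := hsym i i
    linarith

end recon

/-- Lemma 2.1: let W be an n × n random skew-symmetric matrix with independent (up
to skew-symmetry) centered Gaussian entries, and c > 0. If every column j has at
least d entries with variance ≥ n^{-c}, then there are constants C, c' > 0
depending only on c such that for every unit vector x and every t > 0,
P(‖Wx‖₂ ≤ t·n^{-c'}) ≤ (Ct)^d. -/
theorem stmt4 (c : ℝ) (hc : 0 < c) :
    ∃ C c' : ℝ, 0 < C ∧ 0 < c' ∧
      ∀ (n d : ℕ) {Ω : Type} [MeasureSpace Ω]
        [IsProbabilityMeasure (volume : Measure Ω)]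
        (W : Ω → Matrix (Fin n) (Fin n) ℝ),
        (∀ i j, Measurable fun ω => W ω i j) →
        (∀ ω, (W ω)ᵀ = -(W ω)) →
        iIndepFun
          (fun (p : {p : Fin n × Fin n // p.1 < p.2}) (ω : Ω) =>
            W ω p.1.1 p.1.2) volume →
        (∀ i j : Fin n, i < j → ∃ v : NNReal,
          Measure.map (fun ω => W ω i j) volume = gaussianReal 0 v) →
        (∀ j : Fin n, d ≤ (Finset.univ.filter (fun i : Fin n =>
          (n : ℝ) ^ (-c) ≤ variance (fun ω => W ω i j) volume)).card) →
        ∀ x : EuclideanSpace ℝ (Fin n), ‖x‖ = 1 → ∀ t : ℝ, 0 < t →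
          volume {ω | ‖Matrix.toEuclideanCLM (𝕜 := ℝ) (W ω) x‖ ≤ t * (n : ℝ) ^ (-c')} ≤
            ENNReal.ofReal ((C * t) ^ d) := by
  classical
  refine ⟨2, c/2+1, by norm_num, by positivity, ?_⟩
  intro n d Ω _ _ W hmeas hskew hindep hgauss hvar x hx t ht
  rcases Nat.eq_zero_or_pos d with hd0 | hdpos
  · subst hd0
    simpa using (prob_le_one (μ := (volume : Measure Ω)))
  -- basic setup
  have hn : 0 < n := by
    by_contra hn0
    push_neg at hn0
    interval_cases n
    have : x = 0 := Subsingleton.elim x 0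
    rw [this] at hx; simp at hx
  obtain ⟨k, hk⟩ := exists_coord' x hx
  set s : ℝ := t * (n:ℝ) ^ (-(c/2+1)) with hs_def
  -- the every entry family
  set g : {p : Fin n × Fin n // p.1 < p.2} → Ω → ℝ :=
    fun p ω => W ω p.1.1 p.1.2 with hg_def
  have hgmeas : ∀ p, Measurable (g p) := fun p => hmeas _ _
  -- skew symmetry facts
  have hsym : ∀ ω i j, W ω j i = - W ω i j := by
    intro ω i j
    have := congrFun (congrFun (hskew ω) i) j
    simpa [Matrix.transpose_apply] using this
  have hdiag : ∀ ω i, W ω i i = 0 := by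
    intro ω i
    have := hsym ω i i
    linarith
  -- the set S of high-variance rows in column k
  set S : Finset (Fin n) := Finset.univ.filter (fun i : Fin n =>
    (n : ℝ) ^ (-c) ≤ variance (fun ω => W ω i k) volume) with hS_def
  have hdS : d ≤ S.card := hvar k
  have hkS : k ∉ S := by
    rw [hS_def, Finset.mem_filter]
    rintro ⟨-, hkk⟩
    have h0 : (fun ω => W ω k k) = (fun _ => (0:ℝ)) := funext fun ω => hdiag ω k
    rw [h0] at hkk
    have : variance (fun _ : Ω => (0:ℝ)) volume = 0 := by
      have : (fun _ : Ω => (0:ℝ)) = (0 : Ω → ℝ) := rfl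
      rw [this, variance_zero]
    rw [this] at hkk
    have : (0:ℝ) < (n:ℝ) ^ (-c) := Real.rpow_pos_of_pos (by exact_mod_cast hn) _
    linarith
  obtain ⟨S', hS'S, hS'card⟩ := Finset.exists_subset_card_eq hdS
  have hkS' : k ∉ S' := fun h => hkS (hS'S h)
  have hiS'k : ∀ i ∈ S', i ≠ k := fun i hi hik => hkS' (hik ▸ hi)
  -- the map from row indices to pair indices
  have hne : ∀ i : Fin n, i ≠ k → ∃ q : {p : Fin n × Fin n // p.1 < p.2},
      (i < k ∧ q.1 = (i, k)) ∨ (k < i ∧ q.1 = (k, i)) := by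
    intro i hik
    rcases lt_or_gt_of_ne hik with h | h
    · exact ⟨⟨(i,k), h⟩, Or.inl ⟨h, rfl⟩⟩
    · exact ⟨⟨(k,i), h⟩, Or.inr ⟨h, rfl⟩⟩
  obtain ⟨i₀, hi₀⟩ := Finset.card_pos.mp (by rw [hS'card]; exact hdpos)
  obtain ⟨q₀, -⟩ := hne i₀ (hiS'k _ hi₀)
  set e : Fin n → {p : Fin n × Fin n // p.1 < p.2} :=
    fun i => if h : i < k then ⟨(i,k), h⟩ else if h' : k < i then ⟨(k,i), h'⟩
      else q₀ with he_def
  have he_lt : ∀ i (h : i < k), e i = ⟨(i,k), h⟩ := by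
    intro i h; rw [he_def]; simp only [dif_pos h]
  have he_gt : ∀ i (h : k < i), e i = ⟨(k,i), h⟩ := by
    intro i h
    rw [he_def]
    have h2 : ¬ i < k := not_lt.mpr h.le
    simp only [dif_neg h2, dif_pos h]
  -- injectivity of e on S'
  have heinj : Set.InjOn e S' := by
    intro i hi i' hi' hee
    have hik := hiS'k i (by simpa using hi)
    have hik' := hiS'k i' (by simpa using hi')
    rcases lt_or_gt_of_ne hik with h1 | h1 <;> rcases lt_or_gt_of_ne hik' with h2 | h2
    · rw [he_lt i h1, he_lt i' h2] at hee
      exact congrArg (fun q => (Subtype.val q).1) hee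
    · rw [he_lt i h1, he_gt i' h2] at hee
      exfalso
      have : i = k := congrArg (fun q => (Subtype.val q).1) hee
      exact hik this
    · rw [he_gt i h1, he_lt i' h2] at hee
      exfalso
      have : k = i' := congrArg (fun q => (Subtype.val q).1) hee
      exact hik' this.symm
    · rw [he_gt i h1, he_gt i' h2] at hee
      exact congrArg (fun q => (Subtype.val q).2) hee
  set T : Finset {p : Fin n × Fin n // p.1 < p.2} := S'.image e with hT_def
  have hTcard : T.card = d := by
    rw [hT_def, Finset.card_image_of_injOn heinj, hS'card]
  have heT : ∀ i ∈ S', e i ∈ T := by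
    intro i hi; rw [hT_def]; exact Finset.mem_image_of_mem e hi
  -- membership characterization of T : one coordinate is k
  have hTk : ∀ q ∈ T, (q : {p : Fin n × Fin n // p.1 < p.2}).1.1 = k ∨ q.1.2 = k := by
    intro q hq
    rw [hT_def, Finset.mem_image] at hq
    obtain ⟨i, hi, rfl⟩ := hq
    have hik := hiS'k i hi
    rcases lt_or_gt_of_ne hik with h1 | h1
    · rw [he_lt i h1]; exact Or.inr rfl
    · rw [he_gt i h1]; exact Or.inl rfl
  -- the two blocks
  set Y : Ω → (↥T → ℝ) := fun ω q => g q ω with hY_def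
  set Z : Ω → (↥(Tᶜ) → ℝ) := fun ω q => g q ω with hZ_def
  have hYmeas : Measurable Y := measurable_pi_lambda _ (fun q => hgmeas _)
  have hZmeas : Measurable Z := measurable_pi_lambda _ (fun q => hgmeas _)
  have hindYZ : IndepFun Z Y volume := by
    have := hindep.indepFun_finset (Tᶜ) T disjoint_compl_left hgmeas
    exact this
  have hmapprod : Measure.map (fun ω => (Z ω, Y ω)) volume
      = (Measure.map Z volume).prod (Measure.map Y volume) :=
    (indepFun_iff_map_prod_eq_prod_map_map hZmeas.aemeasurable hYmeas.aemeasurable).mp hindYZ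
  haveI : IsProbabilityMeasure (Measure.map Z volume) :=
    Measure.isProbabilityMeasure_map hZmeas.aemeasurable
  haveI : IsProbabilityMeasure (Measure.map Y volume) :=
    Measure.isProbabilityMeasure_map hYmeas.aemeasurable
  -- reconstruction
  have hMrec : ∀ ω, recon T (Z ω) (Y ω) = W ω := by
    intro ω
    refine recon_eq_of T (Z ω) (Y ω) (W ω) (hskew ω) (fun q => rfl) (fun q => rfl)
  -- the bad event, expressed through the coordinates
  set B : Set ((↥(Tᶜ) → ℝ) × (↥T → ℝ)) :=
    {p | ∀ i ∈ S', |(recon T p.1 p.2).mulVec x i| ≤ s} with hB_def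
  have hmv_meas : ∀ i : Fin n,
      Measurable (fun p : (↥(Tᶜ) → ℝ) × (↥T → ℝ) => (recon T p.1 p.2).mulVec x i) := by
    intro i
    have : (fun p : (↥(Tᶜ) → ℝ) × (↥T → ℝ) => (recon T p.1 p.2).mulVec x i)
        = fun p => ∑ j, recon T p.1 p.2 i j * x j := by
      funext p
      simp [Matrix.mulVec, dotProduct]
    rw [this]
    exact Finset.measurable_sum _ (fun j _ => (recon_entry_measurable T i j).mul_const (x j))
  have hBmeas : MeasurableSet B := by
    rw [hB_def]
    have : {p : (↥(Tᶜ) → ℝ) × (↥T → ℝ) | ∀ i ∈ S', |(recon T p.1 p.2).mulVec x i| ≤ s}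
        = ⋂ i ∈ S', {p | |(recon T p.1 p.2).mulVec x i| ≤ s} := by
      ext p; simp
    rw [this]
    refine MeasurableSet.biInter S'.countable_toSet (fun i _ => ?_)
    exact measurableSet_le (hmv_meas i).abs measurable_const
  -- the event is contained in the preimage of B
  have hsub : {ω | ‖Matrix.toEuclideanCLM (𝕜 := ℝ) (W ω) x‖ ≤ s}
      ⊆ (fun ω => (Z ω, Y ω)) ⁻¹' B := by
    intro ω hω
    simp only [Set.mem_setOf_eq] at hω
    simp only [Set.mem_preimage, hB_def, Set.mem_setOf_eq]
    intro i _
    rw [hMrec ω]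
    have hcoord : (W ω).mulVec x i = (Matrix.toEuclideanCLM (𝕜 := ℝ) (W ω) x) i := by
      have := Matrix.ofLp_toEuclideanCLM (𝕜 := ℝ) (W ω) x
      exact (congrFun this i).symm
    rw [hcoord]
    exact le_trans (coord_le_norm' _ i) hω
  -- inner bound for each slice
  have hinner : ∀ z : ↥(Tᶜ) → ℝ,
      (Measure.map Y volume) (Prod.mk z ⁻¹' B) ≤ ENNReal.ofReal ((2*t)^d) := by
    intro z
    -- the residual term, depending only on z
    set r : Fin n → ℝ := fun i => ∑ j ∈ Finset.univ.erase k,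
      recon T z (fun _ => 0) i j * x j with hr_def
    -- entries away from column k do not depend on y
    have hkey : ∀ (q : {p : Fin n × Fin n // p.1 < p.2}), q.1.1 ≠ k → q.1.2 ≠ k →
        ∀ (y : ↥T → ℝ), entryVal T z y q = entryVal T z (fun _ => 0) q := by
      intro q h1 h2 y
      unfold entryVal
      split_ifs with hq
      · rcases hTk q hq with h | h
        · exact absurd h h1
        · exact absurd h h2
      · rfl
    have hentry_off : ∀ (y : ↥T → ℝ) (i : Fin n), i ∈ S' → ∀ j, j ≠ k →
        recon T z y i j = recon T z (fun _ => 0) i j := by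
      intro y i hi j hj
      have hik := hiS'k i hi
      unfold recon
      simp only [Matrix.of_apply]
      split_ifs with h h'
      · exact hkey ⟨(i,j), h⟩ hik hj y
      · exact congrArg Neg.neg (hkey ⟨(j,i), h'⟩ hj hik y)
      · rfl
    -- entry in column k
    have hentry_k : ∀ (y : ↥T → ℝ) (i : Fin n) (hi : i ∈ S'),
        recon T z y i k = (if i < k then 1 else -1) * y ⟨e i, heT i hi⟩ := by
      intro y i hi
      have hik := hiS'k i hi
      rcases lt_or_gt_of_ne hik with h1 | h1
      · unfold recon entryVal
        simp only [Matrix.of_apply, dif_pos h1]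
        have hmem : (⟨(i,k), h1⟩ : {p : Fin n × Fin n // p.1 < p.2}) ∈ T := by
          rw [← he_lt i h1]; exact heT i hi
        rw [dif_pos hmem, if_pos h1, one_mul]
        show y ⟨⟨(i,k), h1⟩, hmem⟩ = _
        have hq : (⟨⟨(i,k), h1⟩, hmem⟩ : ↥T) = ⟨e i, heT i hi⟩ :=
          Subtype.ext (he_lt i h1).symm
        rw [hq]
      · unfold recon entryVal
        have h2 : ¬ i < k := not_lt.mpr h1.le
        simp only [Matrix.of_apply, dif_neg h2, dif_pos h1]
        have hmem : (⟨(k,i), h1⟩ : {p : Fin n × Fin n // p.1 < p.2}) ∈ T := by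
          rw [← he_gt i h1]; exact heT i hi
        rw [dif_pos hmem, if_neg h2, neg_one_mul]
        show - y ⟨⟨(k,i), h1⟩, hmem⟩ = _
        have hq : (⟨⟨(k,i), h1⟩, hmem⟩ : ↥T) = ⟨e i, heT i hi⟩ :=
          Subtype.ext (he_gt i h1).symm
        rw [hq]
    -- decomposition of the matrix-vector product
    have hmv : ∀ (y : ↥T → ℝ) (i : Fin n) (hi : i ∈ S'),
        (recon T z y).mulVec x i
          = (if i < k then x k else -(x k)) * y ⟨e i, heT i hi⟩ + r i := by
      intro y i hi
      have h1 : (recon T z y).mulVec x i = ∑ j, recon T z y i j * x j := by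
        simp [Matrix.mulVec, dotProduct]
      rw [h1, ← Finset.add_sum_erase _ _ (Finset.mem_univ k)]
      congr 1
      · rw [hentry_k y i hi]
        split_ifs <;> ring
      · rw [hr_def]
        refine Finset.sum_congr rfl fun j hj => ?_
        rw [hentry_off y i hi j (Finset.ne_of_mem_erase hj)]
    -- the intervals
    set J : Fin n → Set ℝ :=
      fun i => {u | |(if i < k then x k else -(x k)) * u + r i| ≤ s} with hJ_def
    have hJmeas : ∀ i, MeasurableSet (J i) := by
      intro i
      exact measurableSet_le ((measurable_id.const_mul _).add_const (r i)).abs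
        measurable_const
    -- slice description
    have hslice : Prod.mk z ⁻¹' B = ⋂ i, ⋂ (hi : i ∈ S'),
        (fun y : ↥T → ℝ => y ⟨e i, heT i hi⟩) ⁻¹' J i := by
      ext y
      simp only [Set.mem_preimage, hB_def, Set.mem_setOf_eq, Set.mem_iInter, hJ_def]
      constructor
      · intro h i hi
        rw [← hmv y i hi]
        exact h i hi
      · intro h i hi
        rw [hmv y i hi]
        exact h i hi
    -- sets indexed by pairs
    set Jq : {p : Fin n × Fin n // p.1 < p.2} → Set ℝ :=
      fun q => if q.1.2 = k then {u | |x k * u + r q.1.1| ≤ s}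
        else {u | |(-(x k)) * u + r q.1.2| ≤ s} with hJq_def
    have hJqmeas : ∀ q, MeasurableSet (Jq q) := by
      intro q
      rw [hJq_def]
      dsimp only
      split_ifs
      · exact measurableSet_le ((measurable_id.const_mul _).add_const _).abs measurable_const
      · exact measurableSet_le ((measurable_id.const_mul _).add_const _).abs measurable_const
    have hJq : ∀ i ∈ S', Jq (e i) = J i := by
      intro i hi
      have hik := hiS'k i hi
      rcases lt_or_gt_of_ne hik with h1 | h1
      · rw [he_lt i h1, hJq_def, hJ_def]
        dsimp only
        rw [if_pos rfl, if_pos h1]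
      · rw [he_gt i h1, hJq_def, hJ_def]
        have h2 : ¬ i < k := not_lt.mpr h1.le
        dsimp only
        rw [if_neg hik, if_neg h2]
    -- compute the measure of the slice via independence
    have hYpre : Y ⁻¹' (⋂ i, ⋂ (hi : i ∈ S'),
        (fun y : ↥T → ℝ => y ⟨e i, heT i hi⟩) ⁻¹' J i)
        = ⋂ q ∈ T, g q ⁻¹' Jq q := by
      ext ω
      simp only [Set.mem_preimage, Set.mem_iInter]
      constructor
      · intro h q hq
        have hq' : q ∈ S'.image e := by rw [← hT_def]; exact hq
        rw [Finset.mem_image] at hq'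
        obtain ⟨i, hi, rfl⟩ := hq'
        rw [hJq i hi]
        exact h i hi
      · intro h i hi
        have := h (e i) (heT i hi)
        rw [hJq i hi] at this
        exact this
    have hmeasInter : MeasurableSet (⋂ i, ⋂ (hi : i ∈ S'),
        (fun y : ↥T → ℝ => y ⟨e i, heT i hi⟩) ⁻¹' J i) := by
      refine MeasurableSet.iInter fun i => ?_
      refine MeasurableSet.iInter fun hi => ?_
      exact (measurable_pi_apply _) (hJmeas i)
    rw [hslice, Measure.map_apply hYmeas hmeasInter, hYpre,
      hindep.measure_inter_preimage_eq_mul T (fun q _ => hJqmeas q)]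
    rw [hT_def, Finset.prod_image (fun i hi j hj h => heinj hi hj h)]
    -- bound each factor
    have hfac : ∀ i ∈ S', volume (g (e i) ⁻¹' Jq (e i)) ≤ ENNReal.ofReal (2*t) := by
      intro i hi
      rw [hJq i hi]
      have hik := hiS'k i hi
      -- variance lower bound from the hypothesis
      have hvlb : (n:ℝ) ^ (-c) ≤ variance (fun ω => W ω i k) volume := by
        have := hS'S hi
        rw [hS_def, Finset.mem_filter] at this
        exact this.2
      -- law of g (e i)
      obtain ⟨v, hv⟩ := hgauss (e i).1.1 (e i).1.2 (e i).2
      have hglaw : Measure.map (g (e i)) volume = gaussianReal 0 v := hv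
      have hvar3 : (n:ℝ) ^ (-c) ≤ 3 * (v:ℝ) := by
        have hle := var_le_of_gauss (g (e i)) (hgmeas _) v hglaw
        have hveq : variance (g (e i)) volume = variance (fun ω => W ω i k) volume := by
          rcases lt_or_gt_of_ne hik with h1 | h1
          · rw [he_lt i h1]
          · rw [he_gt i h1]
            have hfun : g (⟨(k,i), h1⟩ : {p : Fin n × Fin n // p.1 < p.2})
                = fun ω => (-1 : ℝ) * W ω i k := by
              funext ω
              show W ω k i = (-1 : ℝ) * W ω i k
              rw [hsym ω i k]; ring
            rw [hfun, variance_const_mul]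
            norm_num
        rw [hveq] at hle
        exact hvlb.trans hle
      -- apply the Gaussian bound
      have hmapJ : volume (g (e i) ⁻¹' J i) = (Measure.map (g (e i)) volume) (J i) :=
        (Measure.map_apply (hgmeas _) (hJmeas i)).symm
      rw [hmapJ, hglaw]
      have habs : Real.sqrt (1/n) ≤ |if i < k then x k else -(x k)| := by
        split_ifs
        · exact hk
        · rw [abs_neg]; exact hk
      have := gauss_main_bound n hn c t hc ht v hvar3
        (if i < k then x k else -(x k)) (r i) habs
      rw [hJ_def]
      simpa [hs_def] using this
    calc ∏ i ∈ S', volume (g (e i) ⁻¹' Jq (e i))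
        ≤ ∏ _i ∈ S', ENNReal.ofReal (2*t) := Finset.prod_le_prod' hfac
      _ = ENNReal.ofReal (2*t) ^ d := by rw [Finset.prod_const, hS'card]
      _ = ENNReal.ofReal ((2*t)^d) := by
          rw [ENNReal.ofReal_pow (by positivity)]
  -- put everything together
  calc volume {ω | ‖Matrix.toEuclideanCLM (𝕜 := ℝ) (W ω) x‖ ≤ t * (n : ℝ) ^ (-(c/2+1))}
      ≤ volume ((fun ω => (Z ω, Y ω)) ⁻¹' B) := measure_mono hsub
    _ = (Measure.map (fun ω => (Z ω, Y ω)) volume) B :=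
        (Measure.map_apply (hZmeas.prodMk hYmeas) hBmeas).symm
    _ = ((Measure.map Z volume).prod (Measure.map Y volume)) B := by rw [hmapprod]
    _ = ∫⁻ z, (Measure.map Y volume) (Prod.mk z ⁻¹' B) ∂(Measure.map Z volume) :=
        Measure.prod_apply hBmeas
    _ ≤ ∫⁻ _z, ENNReal.ofReal ((2*t)^d) ∂(Measure.map Z volume) :=
        lintegral_mono (fun z => hinner z)
    _ = ENNReal.ofReal ((2*t)^d) := by
        rw [lintegral_const, measure_univ, mul_one]
end

section
/- Fix δ ∈ (0, 1/6). For m = ⌊δn/2⌋ and M = 2(m+n), let Γ be the graph on vertex set [M] in which: vertices 1,…,n form a clique (the center); every vertex in {n+1,…,2(n+m)} is connected to all center vertices; and additionally, for each k with n < k ≤ n+m, vertices 2k−1 and 2k are connected to each other. Then the number of perfect matchings of Γ equals n!. -/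
/-- The graph of Proposition 1.8: on M = 2(m+n) vertices (0-indexed), vertices
0,…,n−1 form a clique (the center), every vertex ≥ n is connected to all center
vertices, and additionally the peripheral pairs (2j, 2j+1) for j ≥ n are connected. -/
def periGraph (n m : ℕ) : SimpleGraph (Fin (2 * (m + n))) where
  Adj v w := v ≠ w ∧ (v.1 < n ∨ w.1 < n ∨
    (2 * n ≤ v.1 ∧ 2 * n ≤ w.1 ∧
      ((w.1 = v.1 + 1 ∧ v.1 % 2 = 0) ∨ (v.1 = w.1 + 1 ∧ w.1 % 2 = 0))))
  symm := by
    constructor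
    rintro v w ⟨h1, h2⟩
    exact ⟨fun h => h1 h.symm, by tauto⟩
  loopless := by constructor; rintro v ⟨h1, _⟩; exact h1 rfl

namespace PeriCount

variable {n m : ℕ}

lemma periGraph_adj {v w : Fin (2 * (m + n))} :
    (periGraph n m).Adj v w ↔ v ≠ w ∧ (v.1 < n ∨ w.1 < n ∨
      (2 * n ≤ v.1 ∧ 2 * n ≤ w.1 ∧
        ((w.1 = v.1 + 1 ∧ v.1 % 2 = 0) ∨ (v.1 = w.1 + 1 ∧ w.1 % 2 = 0)))) := Iff.rfl

/-- the mid vertex `n + i`. -/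
def mid (n m : ℕ) (i : Fin n) : Fin (2 * (m + n)) := ⟨n + i.1, by have := i.2; omega⟩

/-- the canonical partner function associated to a permutation. -/
def pfun (σ : Equiv.Perm (Fin n)) (v : Fin (2 * (m + n))) : Fin (2 * (m + n)) :=
  if h : v.1 < n then
    ⟨n + (σ.symm ⟨v.1, h⟩).1, by have := (σ.symm ⟨v.1, h⟩).2; omega⟩
  else if h2 : v.1 < 2 * n then
    have hy : v.1 - n < n := by omega
    ⟨(σ ⟨v.1 - n, hy⟩).1, lt_of_lt_of_le (Fin.is_lt _) (by omega)⟩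
  else if h3 : v.1 % 2 = 0 then ⟨v.1 + 1, by have := v.2; omega⟩
  else ⟨v.1 - 1, by have := v.2; omega⟩

lemma pfun_center (σ : Equiv.Perm (Fin n)) (v : Fin (2 * (m + n))) (h : v.1 < n) :
    pfun σ v = mid n m (σ.symm ⟨v.1, h⟩) := by
  simp [pfun, h, mid]

lemma pfun_mid (σ : Equiv.Perm (Fin n)) (i : Fin n) :
    pfun σ (mid n m i) = ⟨(σ i).1, by have := (σ i).2; omega⟩ := by
  have h1 : ¬ (mid n m i).1 < n := by simp [mid]
  have h2 : (mid n m i).1 < 2 * n := by have := i.2; simp [mid]; omega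
  simp only [pfun, dif_neg h1, dif_pos h2]
  congr 2
  ext
  simp [mid]

lemma pfun_peri (σ : Equiv.Perm (Fin n)) (v : Fin (2 * (m + n))) (h : 2 * n ≤ v.1) :
    (pfun σ v).1 = if v.1 % 2 = 0 then v.1 + 1 else v.1 - 1 := by
  have h1 : ¬ v.1 < n := by omega
  have h2 : ¬ v.1 < 2 * n := by omega
  simp only [pfun, dif_neg h1, dif_neg h2]
  split <;> simp

lemma pfun_invol (σ : Equiv.Perm (Fin n)) (v : Fin (2 * (m + n))) :
    pfun σ (pfun σ v) = v := by
  rcases lt_or_ge v.1 n with h | h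
  · rw [pfun_center σ v h, pfun_mid]
    ext
    simp [Equiv.apply_symm_apply]
  · rcases lt_or_ge v.1 (2 * n) with h2 | h2
    · have hv : v = mid n m ⟨v.1 - n, by omega⟩ := by ext; simp [mid]; omega
      rw [hv, pfun_mid]
      have hlt : (σ ⟨v.1 - n, by omega⟩).1 < n := (σ _).2
      rw [pfun_center σ _ hlt]
      ext
      simp [mid, Equiv.symm_apply_apply]
    · have hp := pfun_peri σ v h2
      have hge : 2 * n ≤ (pfun σ v).1 := by rw [hp]; split <;> omega
      have hp2 := pfun_peri σ (pfun σ v) hge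
      have hv2 := v.2
      ext
      rcases Nat.even_or_odd v.1 with he | ho
      · have hev : v.1 % 2 = 0 := Nat.even_iff.mp he
        rw [if_pos hev] at hp
        rw [hp, if_neg (by omega)] at hp2
        omega
      · have hod : v.1 % 2 = 1 := Nat.odd_iff.mp ho
        rw [if_neg (by omega)] at hp
        rw [hp, if_pos (by omega)] at hp2
        omega

lemma pfun_adj (σ : Equiv.Perm (Fin n)) (v : Fin (2 * (m + n))) :
    (periGraph n m).Adj v (pfun σ v) := by
  rw [periGraph_adj]
  rcases lt_or_ge v.1 n with h | h
  · refine ⟨?_, Or.inl h⟩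
    rw [pfun_center σ v h]
    intro heq
    have := congrArg Fin.val heq
    simp [mid] at this
    omega
  · rcases lt_or_ge v.1 (2 * n) with h2 | h2
    · have hv : v = mid n m ⟨v.1 - n, by omega⟩ := by ext; simp [mid]; omega
      rw [hv, pfun_mid]
      have hlt : (σ ⟨v.1 - n, by omega⟩).1 < n := (σ _).2
      refine ⟨?_, Or.inr (Or.inl hlt)⟩
      intro heq
      have := congrArg Fin.val heq
      simp [mid] at this
      omega
    · have hp := pfun_peri σ v h2
      have hge : 2 * n ≤ (pfun σ v).1 := by rw [hp]; split <;> omega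
      have hv2 := v.2
      rcases Nat.even_or_odd v.1 with he | ho
      · have hev : v.1 % 2 = 0 := Nat.even_iff.mp he
        rw [if_pos hev] at hp
        refine ⟨?_, Or.inr (Or.inr ⟨h2, hge, Or.inl ⟨hp, hev⟩⟩)⟩
        intro heq
        have := congrArg Fin.val heq
        omega
      · have hod : v.1 % 2 = 1 := Nat.odd_iff.mp ho
        rw [if_neg (by omega)] at hp
        refine ⟨?_, Or.inr (Or.inr ⟨h2, hge, Or.inr ⟨by omega, by omega⟩⟩)⟩
        intro heq
        have := congrArg Fin.val heq
        omega

/-- The perfect matching associated to a permutation. -/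
def pMatch (σ : Equiv.Perm (Fin n)) : (periGraph n m).Subgraph where
  verts := Set.univ
  Adj v w := pfun σ v = w ∧ pfun σ w = v
  adj_sub := by rintro v w ⟨h1, h2⟩; rw [← h1]; exact pfun_adj σ v
  edge_vert := by intros; trivial
  symm := by constructor; rintro v w ⟨h1, h2⟩; exact ⟨h2, h1⟩

lemma pMatch_perfect (σ : Equiv.Perm (Fin n)) :
    (pMatch (m := m) σ).IsPerfectMatching := by
  rw [SimpleGraph.Subgraph.isPerfectMatching_iff]
  intro v
  refine ⟨pfun σ v, ⟨rfl, pfun_invol σ v⟩, ?_⟩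
  rintro w ⟨h1, h2⟩
  exact h1.symm

section Extract

variable {M : (periGraph n m).Subgraph} (hM : M.IsPerfectMatching)

/-- the partner of a vertex in a perfect matching. -/
noncomputable def partner (v : Fin (2 * (m + n))) : Fin (2 * (m + n)) :=
  (SimpleGraph.Subgraph.isPerfectMatching_iff.mp hM v).choose

lemma partner_adj (v : Fin (2 * (m + n))) : M.Adj v (partner hM v) :=
  (SimpleGraph.Subgraph.isPerfectMatching_iff.mp hM v).choose_spec.1

lemma partner_unique {v w : Fin (2 * (m + n))} (h : M.Adj v w) : w = partner hM v :=
  (SimpleGraph.Subgraph.isPerfectMatching_iff.mp hM v).choose_spec.2 w h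

lemma partner_mid_lt (i : Fin n) : (partner hM (mid n m i)).1 < n := by
  have h := M.adj_sub (partner_adj hM (mid n m i))
  rw [periGraph_adj] at h
  have h1 : (mid n m i).1 = n + i.1 := rfl
  have h2 := i.2
  rcases h.2 with h' | h' | h' <;> omega

/-- the permutation extracted from a perfect matching. -/
noncomputable def extPerm : Equiv.Perm (Fin n) :=
  Equiv.ofBijective (fun i => ⟨(partner hM (mid n m i)).1, partner_mid_lt hM i⟩)
    ((Finite.injective_iff_bijective).mp (by
      intro i j hij
      simp only [Fin.mk.injEq] at hij
      have h1 : partner hM (mid n m i) = partner hM (mid n m j) := Fin.ext hij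
      have h2 : mid n m i = partner hM (partner hM (mid n m i)) :=
        partner_unique hM (partner_adj hM (mid n m i)).symm
      have h3 : mid n m j = partner hM (partner hM (mid n m j)) :=
        partner_unique hM (partner_adj hM (mid n m j)).symm
      rw [h1] at h2
      have : mid n m i = mid n m j := h2.trans h3.symm
      have := congrArg Fin.val this
      simp [mid] at this
      exact Fin.ext this))

lemma extPerm_apply (i : Fin n) :
    extPerm hM i = ⟨(partner hM (mid n m i)).1, partner_mid_lt hM i⟩ := rfl

lemma partner_center (v : Fin (2 * (m + n))) (h : v.1 < n) :
    partner hM v = mid n m ((extPerm hM).symm ⟨v.1, h⟩) := by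
  set j := (extPerm hM).symm ⟨v.1, h⟩ with hj
  have hσ : extPerm hM j = ⟨v.1, h⟩ := Equiv.apply_symm_apply _ _
  rw [extPerm_apply] at hσ
  simp only [Fin.mk.injEq] at hσ
  have hpj : partner hM (mid n m j) = v := Fin.ext hσ
  have : M.Adj v (mid n m j) := by
    have := partner_adj hM (mid n m j)
    rw [hpj] at this
    exact this.symm
  exact (partner_unique hM this).symm

lemma adj_pfun_ext (v : Fin (2 * (m + n))) : partner hM v = pfun (extPerm hM) v := by
  rcases lt_or_ge v.1 n with h | h
  · rw [pfun_center _ v h, partner_center hM v h]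
  · rcases lt_or_ge v.1 (2 * n) with h2 | h2
    · have hv : v = mid n m ⟨v.1 - n, by omega⟩ := by ext; simp [mid]; omega
      conv_lhs => rw [hv]
      conv_rhs => rw [hv]
      rw [pfun_mid]
      ext
      rfl
    · -- peripheral
      set w := partner hM v with hw
      have hadj := partner_adj hM v
      have hΓ := M.adj_sub hadj
      rw [periGraph_adj] at hΓ
      obtain ⟨hne, hcase⟩ := hΓ
      have hwn : ¬ w.1 < n := by
        intro hwlt
        have := partner_center hM w hwlt
        have hvw : v = partner hM w := partner_unique hM hadj.symm
        rw [this] at hvw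
        have := congrArg Fin.val hvw
        simp [mid] at this
        have := ((extPerm hM).symm ⟨w.1, hwlt⟩).2
        omega
      have hpair : 2 * n ≤ v.1 ∧ 2 * n ≤ w.1 ∧
          ((w.1 = v.1 + 1 ∧ v.1 % 2 = 0) ∨ (v.1 = w.1 + 1 ∧ w.1 % 2 = 0)) := by
        rcases hcase with h' | h' | h'
        · omega
        · exact absurd h' hwn
        · exact h'
      have hp := pfun_peri (extPerm hM) v h2
      ext
      rw [hp]
      rcases hpair.2.2 with ⟨he, hev⟩ | ⟨he, hev⟩
      · simp [hev]; omega
      · have : ¬ v.1 % 2 = 0 := by omega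
        simp [this]; omega

end Extract

/-- The bijection between permutations and perfect matchings. -/
noncomputable def theEquiv (n m : ℕ) :
    Equiv.Perm (Fin n) ≃ {M : (periGraph n m).Subgraph // M.IsPerfectMatching} where
  toFun σ := ⟨pMatch σ, pMatch_perfect σ⟩
  invFun M := extPerm M.2
  left_inv σ := by
    ext i
    show (partner (pMatch_perfect σ) (mid n m i)).1 = (σ i).1
    have hp : pfun σ (mid n m i) = partner (pMatch_perfect σ) (mid n m i) :=
      partner_unique (pMatch_perfect σ) ⟨rfl, pfun_invol σ _⟩
    rw [← hp, pfun_mid]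
  right_inv M := by
    apply Subtype.ext
    ext v w
    · constructor
      · intro _; exact M.2.2 v
      · intro _; trivial
    · constructor
      · rintro ⟨h1, h2⟩
        have := partner_adj M.2 v
        rwa [adj_pfun_ext M.2 v, h1] at this
      · intro h
        have h1 : w = pfun (extPerm M.2) v := by
          rw [← adj_pfun_ext M.2 v]; exact partner_unique M.2 h
        refine ⟨h1.symm, ?_⟩
        rw [h1, pfun_invol]

end PeriCount

/-- Proposition 1.8, counting step: with δ ∈ (0, 1/6) and m = ⌊δn/2⌋, the number
of perfect matchings of the graph Γ equals n!. -/
theorem stmt15 (δ : ℝ) (hδ0 : 0 < δ) (hδ1 : δ < 1 / 6) (n m : ℕ)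
    (hm : m = ⌊δ * n / 2⌋₊) :
    Nat.card {M : (periGraph n m).Subgraph // M.IsPerfectMatching} = n.factorial := by
  rw [← Nat.card_congr (PeriCount.theEquiv n m)]
  simp [Nat.card_eq_fintype_card, Fintype.card_perm]
end
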